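/- arXiv:1712.01385 — 4 statements merged into one kernel-verified Lean document; each statement's English description precedes it below -/
import Mathlib

section
/- Let P be a self-adjoint operator on a finite-dimensional Hilbert space H₀ with eigenvalues p₁, …, p_d (with multiplicity). For any orthonormal basis (z_i) of H₀, the sum of the positive parts of the diagonal elements satisfies ∑ᵢ max(⟨zᵢ, P zᵢ⟩, 0) ≤ ∑ᵢ max(pᵢ, 0). -/
open scoped InnerProductSpace

/-- Schur–Horn bound: for a self-adjoint operator `P` on a finite-dimensional Hilbert space,
and any orthonormal basis `z`, the sum of the positive parts of the diagonal elements
`⟨z i, P (z i)⟩` is at most the sum of the positive parts of the eigenvalues of `P`. -/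
theorem sum_posPart_diagonal_le_sum_posPart_eigenvalues
    {H₀ : Type*} [NormedAddCommGroup H₀] [InnerProductSpace ℂ H₀]
    [FiniteDimensional ℂ H₀] {d : ℕ} (hd : Module.finrank ℂ H₀ = d)
    (P : H₀ →ₗ[ℂ] H₀) (hP : P.IsSymmetric)
    (z : OrthonormalBasis (Fin d) ℂ H₀) :
    ∑ i, max (⟪z i, P (z i)⟫_ℂ).re 0 ≤ ∑ i, max (hP.eigenvalues hd i) 0 := by
  set e := hP.eigenvectorBasis hd with he
  set p := hP.eigenvalues hd with hp
  set c : Fin d → Fin d → ℝ := fun i j => ‖⟪e j, z i⟫_ℂ‖ ^ 2 with hc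
  have hdiag : ∀ i, (⟪z i, P (z i)⟫_ℂ).re = ∑ j, p j * c i j := by
    intro i
    have h1 : ⟪z i, P (z i)⟫_ℂ = ∑ j, ⟪z i, e j⟫_ℂ * ⟪e j, P (z i)⟫_ℂ :=
      (e.sum_inner_mul_inner (z i) (P (z i))).symm
    have h2 : ∀ j, ⟪z i, e j⟫_ℂ * ⟪e j, P (z i)⟫_ℂ = (p j : ℂ) * (c i j : ℝ) := by
      intro j
      have := hP (e j) (z i)
      rw [hP.apply_eigenvectorBasis hd j] at this
      rw [← this, inner_smul_left]
      rw [← inner_conj_symm (z i) (e j)]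
      simp only [Complex.conj_ofReal, RCLike.conj_ofReal, hc]
      set a := ⟪e j, z i⟫_ℂ
      have ha : (starRingEnd ℂ) a * a = ((‖a‖ ^ 2 : ℝ) : ℂ) := by
        rw [mul_comm, Complex.mul_conj]
        norm_cast
        simp [Complex.normSq_eq_norm_sq]
      calc (starRingEnd ℂ) a * ((p j : ℂ) * a) = (p j : ℂ) * ((starRingEnd ℂ) a * a) := by ring
        _ = (p j : ℂ) * ((‖a‖ ^ 2 : ℝ) : ℂ) := by rw [ha]
    rw [h1]
    simp_rw [h2]
    simp
  have hsum : ∀ j, ∑ i, c i j = 1 := by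
    intro j
    have h1 : ⟪e j, e j⟫_ℂ = ∑ i, ⟪e j, z i⟫_ℂ * ⟪z i, e j⟫_ℂ :=
      (z.sum_inner_mul_inner (e j) (e j)).symm
    have h2 : ∀ i, ⟪e j, z i⟫_ℂ * ⟪z i, e j⟫_ℂ = (c i j : ℂ) := by
      intro i
      rw [← inner_conj_symm (z i) (e j), Complex.mul_conj]
      norm_cast
      simp [hc, Complex.normSq_eq_norm_sq]
    simp_rw [h2] at h1
    have h3 : ((∑ i, c i j : ℝ) : ℂ) = 1 := by
      push_cast
      rw [← h1, inner_self_eq_norm_sq_to_K, e.orthonormal.1 j]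
      norm_num
    exact_mod_cast h3
  calc ∑ i, max (⟪z i, P (z i)⟫_ℂ).re 0
      ≤ ∑ i, ∑ j, max (p j) 0 * c i j := by
        apply Finset.sum_le_sum
        intro i _
        rw [hdiag i]
        apply max_le
        · exact Finset.sum_le_sum fun j _ =>
            mul_le_mul_of_nonneg_right (le_max_left _ _) (by positivity)
        · exact Finset.sum_nonneg fun j _ => mul_nonneg (le_max_right _ _) (by positivity)
    _ = ∑ j, max (p j) 0 := by
        rw [Finset.sum_comm]
        simp_rw [← Finset.mul_sum, hsum, mul_one]
end

section
/- Let H be a Hilbert space, u₁, …, u_N ∈ H, and λ₁, …, λ_N ∈ ℝ. Define the N×N Gram matrix Q with Q_{mn} = ⟨u_m, u_n⟩ and the diagonal matrix Λ with entries λ_n. If Q = S* S is any decomposition and P = S Λ S*, then the supremum of ∑ₙ λₙ ⟨uₙ, E uₙ⟩ over all orthogonal projections E ∈ B(H) equals the sum of the positive eigenvalues of the self-adjoint matrix P. -/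
open scoped InnerProductSpace
open ContinuousLinearMap

set_option maxHeartbeats 1000000 in
/-- Quantum bound: for vectors `u n` in a Hilbert space and scalars `lam n`, the supremum of
`∑ n, lam n * ⟨u n, E u n⟩` over all orthogonal projections `E` equals the sum of the
positive eigenvalues of `P = S Λ S*`, where `S* S = Q` is the Gram matrix `Q m n = ⟨u m, u n⟩`. -/
theorem sup_projection_valuation_eq_sum_pos_eigenvalues
    {H : Type*} [NormedAddCommGroup H] [InnerProductSpace ℂ H] [CompleteSpace H]
    {N d : ℕ} (u : Fin N → H) (lam : Fin N → ℝ)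
    (S : Matrix (Fin d) (Fin N) ℂ)
    (hS : S.conjTranspose * S = Matrix.of fun m n => ⟪u m, u n⟫_ℂ)
    (hP : (S * Matrix.diagonal (fun n => (lam n : ℂ)) * S.conjTranspose).IsHermitian) :
    sSup {t : ℝ | ∃ E : H →L[ℂ] H, IsSelfAdjoint E ∧ E ∘L E = E ∧
        t = ∑ n, lam n * (⟪u n, E (u n)⟫_ℂ).re}
      = ∑ i, max (hP.eigenvalues i) 0 := by
  classical
  set μ : Fin d → ℝ := hP.eigenvalues with hμdef
  set v : Fin d → EuclideanSpace ℂ (Fin d) := fun i => hP.eigenvectorBasis i with hvdef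
  set s : Fin N → EuclideanSpace ℂ (Fin d) := fun n => WithLp.toLp 2 (fun k => S k n) with hsdef
  set c : Fin d → Fin N → ℂ := fun i n => ⟪s n, v i⟫_ℂ with hcdef
  have hc_mulVec : ∀ i, c i = S.conjTranspose.mulVec (v i) := by
    intro i
    funext n
    simp [hcdef, Matrix.mulVec, dotProduct, PiLp.inner_apply,
      Matrix.conjTranspose_apply, hsdef, mul_comm]
  have hvv : ∀ i j, ⟪v i, v j⟫_ℂ = if i = j then 1 else 0 := by
    intro i j
    exact orthonormal_iff_ite.mp hP.eigenvectorBasis.orthonormal i j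
  have hC : ∀ i j, (∑ n, (starRingEnd ℂ) (c i n) * ((lam n : ℂ) * c j n))
      = if i = j then (μ i : ℂ) else 0 := by
    intro i j
    have h1 : (∑ n, (starRingEnd ℂ) (c i n) * ((lam n : ℂ) * c j n))
        = dotProduct (star (c i)) ((Matrix.diagonal (fun n => (lam n : ℂ))).mulVec (c j)) := by
      simp [dotProduct, Matrix.mulVec_diagonal, Pi.star_apply]
    rw [h1, hc_mulVec i, hc_mulVec j, Matrix.star_mulVec, Matrix.conjTranspose_conjTranspose,
      Matrix.mulVec_mulVec, ← Matrix.dotProduct_mulVec, Matrix.mulVec_mulVec,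
      ← Matrix.mul_assoc]
    have h2 : (S * Matrix.diagonal (fun n => (lam n : ℂ)) * S.conjTranspose).mulVec (v j)
        = (μ j : ℂ) • (v j : Fin d → ℂ) := by
      have := hP.mulVec_eigenvectorBasis j
      simpa [hvdef] using this
    rw [h2, dotProduct_smul]
    have h3 : dotProduct (star (v i : Fin d → ℂ)) (v j) = ⟪v i, v j⟫_ℂ := by
      simp [PiLp.inner_apply, dotProduct, Pi.star_apply, mul_comm]
    rw [h3, hvv]
    split_ifs with h
    · subst h; simp [Complex.real_smul]
    · simp
  have hB : ∀ m n, ⟪u m, u n⟫_ℂ = ∑ i, c i m * (starRingEnd ℂ) (c i n) := by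
    intro m n
    have h1 : ⟪u m, u n⟫_ℂ = ⟪s m, s n⟫_ℂ := by
      have := congrFun (congrFun hS m) n
      simp only [Matrix.mul_apply, Matrix.conjTranspose_apply, Matrix.of_apply] at this
      rw [← this]
      simp [PiLp.inner_apply, hsdef, mul_comm]
    rw [h1, ← hP.eigenvectorBasis.sum_inner_mul_inner (s m) (s n)]
    refine Finset.sum_congr rfl fun i _ => ?_
    simp [hcdef, hvdef, mul_comm]
  set T : (Fin N → ℂ) → H := fun h => ∑ n, h n • u n with hTdef
  set γ : (Fin N → ℂ) → Fin d → ℂ := fun h i => ∑ n, (starRingEnd ℂ) (c i n) * h n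
    with hγdef
  have hswap3 : ∀ (F : Fin N → Fin N → Fin d → ℂ),
      ∑ m, ∑ n, ∑ i, F m n i = ∑ i, ∑ m, ∑ n, F m n i := by
    intro F
    have h1 : ∀ m, ∑ n, ∑ i, F m n i = ∑ i, ∑ n, F m n i := fun m => by
      rw [Finset.sum_comm]
    simp_rw [h1]
    rw [Finset.sum_comm]
  have hTT : ∀ g h : Fin N → ℂ,
      ⟪T g, T h⟫_ℂ = ∑ i, (starRingEnd ℂ) (γ g i) * γ h i := by
    intro g h
    have lhs_eq : ⟪T g, T h⟫_ℂ
        = ∑ n, ∑ m, ∑ i, (h n * (starRingEnd ℂ) (g m)) * (c i m * (starRingEnd ℂ) (c i n)) := by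
      rw [hTdef]
      simp only [sum_inner, inner_sum, inner_smul_left, inner_smul_right]
      refine Finset.sum_congr rfl fun n _ => ?_
      rw [Finset.mul_sum]
      refine Finset.sum_congr rfl fun m _ => ?_
      rw [hB m n, Finset.mul_sum, Finset.mul_sum]
      refine Finset.sum_congr rfl fun i _ => ?_
      ring
    rw [lhs_eq, hswap3]
    refine Finset.sum_congr rfl fun i _ => ?_
    rw [Finset.sum_comm, hγdef]
    simp only [map_sum, map_mul, RingHomCompTriple.comp_apply, RingHom.id_apply,
      starRingEnd_self_apply]
    rw [Finset.sum_mul_sum]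
    refine Finset.sum_congr rfl fun m _ => Finset.sum_congr rfl fun n _ => ?_
    ring
  set ψ : Fin d → H := fun i => ((μ i : ℂ))⁻¹ • T (fun n => (lam n : ℂ) * c i n)
    with hψdef
  have hγΛc : ∀ i j, γ (fun n => (lam n : ℂ) * c j n) i = if i = j then (μ i : ℂ) else 0 := by
    intro i j
    rw [hγdef]
    simp only
    rw [← hC i j]
  have hTψ : ∀ j, (μ j : ℂ) • ψ j = T (fun n => (lam n : ℂ) * c j n) := by
    intro j
    by_cases hj : μ j = 0
    · have h0 : ⟪T (fun n => (lam n : ℂ) * c j n), T (fun n => (lam n : ℂ) * c j n)⟫_ℂ = 0 := by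
        rw [hTT]
        simp_rw [hγΛc]
        simp [apply_ite (starRingEnd ℂ), ite_mul, mul_ite, Finset.sum_ite_eq', hj,
          Complex.conj_ofReal]
      rw [inner_self_eq_zero.mp h0, hj]
      simp
    · rw [hψdef]
      simp only
      rw [smul_inv_smul₀ (by exact_mod_cast hj)]
  have hψψ : ∀ i j, μ i ≠ 0 → μ j ≠ 0 → ⟪ψ i, ψ j⟫_ℂ = if i = j then 1 else 0 := by
    intro i j hi hj
    rw [hψdef]
    simp only
    rw [inner_smul_left, inner_smul_right, hTT]
    simp_rw [hγΛc]
    simp only [apply_ite (starRingEnd ℂ), map_zero, Complex.conj_ofReal, ite_mul, mul_ite,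
      zero_mul, mul_zero]
    rw [Finset.sum_ite_eq' Finset.univ j (fun x => if x = i then (μ x : ℂ) * (μ x : ℂ) else 0)]
    by_cases h : i = j
    · subst h
      simp only [if_pos rfl, Finset.mem_univ, if_true, map_inv₀, Complex.conj_ofReal]
      have hci : (μ i : ℂ) ≠ 0 := by exact_mod_cast hi
      field_simp
    · rw [if_neg h]
      simp [Finset.mem_univ, Ne.symm h]
  have hG : ∀ x : H, (∑ n, ((lam n : ℂ) * ⟪u n, x⟫_ℂ) • u n)
      = ∑ i, ((μ i : ℂ) * ⟪ψ i, x⟫_ℂ) • ψ i := by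
    intro x
    set g : Fin N → ℂ := fun n => (lam n : ℂ) * ⟪u n, x⟫_ℂ with hg
    set k : Fin N → ℂ := fun n => ∑ i, ⟪ψ i, x⟫_ℂ * ((lam n : ℂ) * c i n) with hk
    have hLHS : (∑ n, ((lam n : ℂ) * ⟪u n, x⟫_ℂ) • u n) = T g := by rw [hTdef]
    have hRHS : (∑ i, ((μ i : ℂ) * ⟪ψ i, x⟫_ℂ) • ψ i) = T k := by
      have e1 : ∀ i : Fin d, ((μ i : ℂ) * ⟪ψ i, x⟫_ℂ) • ψ i
          = ⟪ψ i, x⟫_ℂ • T (fun n => (lam n : ℂ) * c i n) := by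
        intro i
        rw [mul_comm, mul_smul, hTψ i]
      simp_rw [e1]
      rw [hTdef, hk]
      simp only
      simp_rw [Finset.smul_sum, Finset.sum_smul, smul_smul]
      rw [Finset.sum_comm]
    rw [hLHS, hRHS]
    -- show T g = T k by showing T (g - k) = 0
    have hγg : ∀ i, γ g i = (μ i : ℂ) * ⟪ψ i, x⟫_ℂ := by
      intro i
      have e2 : γ g i = ⟪T (fun n => (lam n : ℂ) * c i n), x⟫_ℂ := by
        rw [hTdef, hγdef, hg]
        simp only
        rw [sum_inner]
        refine Finset.sum_congr rfl fun n _ => ?_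
        rw [inner_smul_left]
        simp [Complex.conj_ofReal]
        ring
      rw [e2, ← hTψ i, inner_smul_left, Complex.conj_ofReal]
    have hγk : ∀ i, γ k i = (μ i : ℂ) * ⟪ψ i, x⟫_ℂ := by
      intro i
      rw [hγdef, hk]
      simp only
      have e3 : ∀ n, (starRingEnd ℂ) (c i n) * (∑ j, ⟪ψ j, x⟫_ℂ * ((lam n : ℂ) * c j n))
          = ∑ j, ⟪ψ j, x⟫_ℂ * ((starRingEnd ℂ) (c i n) * ((lam n : ℂ) * c j n)) := by
        intro n
        rw [Finset.mul_sum]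
        exact Finset.sum_congr rfl fun j _ => by ring
      simp_rw [e3]
      rw [Finset.sum_comm]
      have e4 : ∀ j, (∑ n, ⟪ψ j, x⟫_ℂ * ((starRingEnd ℂ) (c i n) * ((lam n : ℂ) * c j n)))
          = ⟪ψ j, x⟫_ℂ * (if i = j then (μ i : ℂ) else 0) := by
        intro j
        rw [← Finset.mul_sum, hC i j]
      simp_rw [e4]
      simp [Finset.sum_ite_eq, mul_comm]
    have hγgk : ∀ i, γ (fun n => g n - k n) i = 0 := by
      intro i
      have : γ (fun n => g n - k n) i = γ g i - γ k i := by
        rw [hγdef]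
        simp only
        rw [← Finset.sum_sub_distrib]
        exact Finset.sum_congr rfl fun n _ => by ring
      rw [this, hγg, hγk, sub_self]
    have hT0 : T (fun n => g n - k n) = 0 := by
      have h0 : ⟪T (fun n => g n - k n), T (fun n => g n - k n)⟫_ℂ = 0 := by
        rw [hTT]
        simp [hγgk]
      exact inner_self_eq_zero.mp h0
    have hsub : T (fun n => g n - k n) = T g - T k := by
      rw [hTdef]
      simp only
      rw [← Finset.sum_sub_distrib]
      exact Finset.sum_congr rfl fun n _ => (sub_smul _ _ _)
    rw [hsub] at hT0
    exact sub_eq_zero.mp hT0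
  haveI : FiniteDimensional ℂ (Submodule.span ℂ (Set.range u)) :=
    FiniteDimensional.span_of_finite ℂ (Set.finite_range u)
  set V := Submodule.span ℂ (Set.range u) with hVdef
  have huV : ∀ n, u n ∈ V := fun n => Submodule.subset_span (Set.mem_range_self n)
  have hψV : ∀ i, ψ i ∈ V := by
    intro i
    rw [hψdef]
    refine Submodule.smul_mem _ _ ?_
    rw [hTdef]
    exact Submodule.sum_mem _ fun n _ => Submodule.smul_mem _ _ (huV n)
  set b := stdOrthonormalBasis ℂ V with hbdef
  have hexp : ∀ w : H, w ∈ V → ∀ y : H,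
      ⟪w, y⟫_ℂ = ∑ p, ⟪w, (b p : H)⟫_ℂ * ⟪(b p : H), y⟫_ℂ := by
    intro w hw y
    have h1 : ((∑ p, b.repr ⟨w, hw⟩ p • b p : V) : H) = w :=
      congrArg Subtype.val (b.sum_repr ⟨w, hw⟩)
    have h1' : (∑ p, b.repr ⟨w, hw⟩ p • (b p : H)) = w := by
      simpa [Submodule.coe_sum, Submodule.coe_smul] using h1
    have h2 : ∀ p, b.repr ⟨w, hw⟩ p = ⟪(b p : H), w⟫_ℂ := fun p => by
      rw [b.repr_apply_apply]
      exact Submodule.coe_inner V (b p) ⟨w, hw⟩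
    conv_lhs => rw [← h1']
    rw [sum_inner]
    refine Finset.sum_congr rfl fun p _ => ?_
    rw [inner_smul_left, h2 p, inner_conj_symm]
  have htr : ∀ E : H →L[ℂ] H, IsSelfAdjoint E →
      (∑ n, (lam n : ℂ) * ⟪u n, E (u n)⟫_ℂ) = ∑ i, (μ i : ℂ) * ⟪ψ i, E (ψ i)⟫_ℂ := by
    intro E hE
    have hsym : ∀ x y : H, ⟪E x, y⟫_ℂ = ⟪x, E y⟫_ℂ := fun x y =>
      (ContinuousLinearMap.isSelfAdjoint_iff_isSymmetric.mp hE) x y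
    calc ∑ n, (lam n : ℂ) * ⟪u n, E (u n)⟫_ℂ
        = ∑ n, ∑ p, (lam n : ℂ) * (⟪u n, (b p : H)⟫_ℂ * ⟪(b p : H), E (u n)⟫_ℂ) := by
          refine Finset.sum_congr rfl fun n _ => ?_
          rw [hexp (u n) (huV n) (E (u n)), Finset.mul_sum]
      _ = ∑ p, ∑ n, (lam n : ℂ) * (⟪u n, (b p : H)⟫_ℂ * ⟪E (b p : H), u n⟫_ℂ) := by
          rw [Finset.sum_comm]
          exact Finset.sum_congr rfl fun p _ => Finset.sum_congr rfl fun n _ => by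
            rw [← hsym]
      _ = ∑ p, ⟪E (b p : H), ∑ n, ((lam n : ℂ) * ⟪u n, (b p : H)⟫_ℂ) • u n⟫_ℂ := by
          refine Finset.sum_congr rfl fun p _ => ?_
          rw [inner_sum]
          refine Finset.sum_congr rfl fun n _ => ?_
          rw [inner_smul_right]
          ring
      _ = ∑ p, ⟪E (b p : H), ∑ i, ((μ i : ℂ) * ⟪ψ i, (b p : H)⟫_ℂ) • ψ i⟫_ℂ := by
          refine Finset.sum_congr rfl fun p _ => ?_
          rw [hG]
      _ = ∑ p, ∑ i, (μ i : ℂ) * (⟪ψ i, (b p : H)⟫_ℂ * ⟪(b p : H), E (ψ i)⟫_ℂ) := by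
          refine Finset.sum_congr rfl fun p _ => ?_
          rw [inner_sum]
          refine Finset.sum_congr rfl fun i _ => ?_
          rw [inner_smul_right, hsym]
          ring
      _ = ∑ i, (μ i : ℂ) * ⟪ψ i, E (ψ i)⟫_ℂ := by
          rw [Finset.sum_comm]
          refine Finset.sum_congr rfl fun i _ => ?_
          rw [← Finset.mul_sum, ← hexp (ψ i) (hψV i) (E (ψ i))]
  have htrR : ∀ E : H →L[ℂ] H, IsSelfAdjoint E →
      (∑ n, lam n * (⟪u n, E (u n)⟫_ℂ).re) = ∑ i, μ i * (⟪ψ i, E (ψ i)⟫_ℂ).re := by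
    intro E hE
    have h := congrArg Complex.re (htr E hE)
    simpa [Complex.re_sum, Complex.re_ofReal_mul] using h
  -- upper bound
  have hub : ∀ t ∈ {t : ℝ | ∃ E : H →L[ℂ] H, IsSelfAdjoint E ∧ E ∘L E = E ∧
      t = ∑ n, lam n * (⟪u n, E (u n)⟫_ℂ).re}, t ≤ ∑ i, max (μ i) 0 := by
    rintro t ⟨E, hE, hEE, rfl⟩
    rw [htrR E hE]
    refine Finset.sum_le_sum fun i _ => ?_
    have hsym : ∀ x y : H, ⟪E x, y⟫_ℂ = ⟪x, E y⟫_ℂ := fun x y =>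
      (ContinuousLinearMap.isSelfAdjoint_iff_isSymmetric.mp hE) x y
    have hEψ2 : E (E (ψ i)) = E (ψ i) := by
      conv_rhs => rw [← hEE]
      rfl
    have hre : (⟪ψ i, E (ψ i)⟫_ℂ).re = ‖E (ψ i)‖ ^ 2 := by
      rw [← hEψ2, ← hsym, hEψ2]
      rw [inner_self_eq_norm_sq_to_K]
      norm_cast
    rw [hre]
    by_cases hi : μ i = 0
    · simp [hi]
    · have hψn : ‖ψ i‖ = 1 := by
        have h11 : ⟪ψ i, ψ i⟫_ℂ = 1 := by simpa using hψψ i i hi hi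
        rw [inner_self_eq_norm_sq_to_K] at h11
        norm_cast at h11
        rw [show (1:ℂ) = ((1:ℝ):ℂ) from rfl] at h11; have h12 := Complex.ofReal_injective h11; simp at h12
        rcases h12 with h12 | h12
        · exact h12
        · nlinarith [norm_nonneg (ψ i)]
      have hr0 : (0:ℝ) ≤ ‖E (ψ i)‖ := norm_nonneg _
      have hr1 : ‖E (ψ i)‖ ≤ 1 := by
        have hcs : ‖⟪ψ i, E (ψ i)⟫_ℂ‖ ≤ ‖ψ i‖ * ‖E (ψ i)‖ := norm_inner_le_norm _ _
        have hle : ‖E (ψ i)‖ ^ 2 ≤ ‖E (ψ i)‖ := by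
          rw [← hre]
          calc (⟪ψ i, E (ψ i)⟫_ℂ).re ≤ ‖⟪ψ i, E (ψ i)⟫_ℂ‖ := by
                exact Complex.re_le_norm _
            _ ≤ ‖ψ i‖ * ‖E (ψ i)‖ := hcs
            _ = ‖E (ψ i)‖ := by rw [hψn, one_mul]
        nlinarith
      rcases le_or_gt (μ i) 0 with h | h
      · calc μ i * ‖E (ψ i)‖ ^ 2 ≤ 0 := mul_nonpos_of_nonpos_of_nonneg h (by positivity)
          _ ≤ max (μ i) 0 := le_max_right _ _
      · have hsq : ‖E (ψ i)‖ ^ 2 ≤ 1 := by nlinarith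
        calc μ i * ‖E (ψ i)‖ ^ 2 ≤ μ i * 1 := mul_le_mul_of_nonneg_left hsq h.le
          _ = μ i := mul_one _
          _ ≤ max (μ i) 0 := le_max_left _ _
  -- membership
  have hmem : (∑ i, max (μ i) 0) ∈ {t : ℝ | ∃ E : H →L[ℂ] H, IsSelfAdjoint E ∧ E ∘L E = E ∧
      t = ∑ n, lam n * (⟪u n, E (u n)⟫_ℂ).re} := by
    set I : Finset (Fin d) := Finset.univ.filter (fun i => 0 < μ i) with hI
    have hIne : ∀ i ∈ I, μ i ≠ 0 := fun i hi => (Finset.mem_filter.mp hi).2.ne'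
    set E₀ : H →L[ℂ] H := ∑ i ∈ I, (innerSL ℂ (ψ i)).smulRight (ψ i) with hE₀
    have hE₀apply : ∀ x, E₀ x = ∑ i ∈ I, ⟪ψ i, x⟫_ℂ • ψ i := by
      intro x
      rw [hE₀]
      simp [ContinuousLinearMap.sum_apply]
    have hsa : IsSelfAdjoint E₀ := by
      rw [ContinuousLinearMap.isSelfAdjoint_iff_isSymmetric]
      intro x y
      show ⟪E₀ x, y⟫_ℂ = ⟪x, E₀ y⟫_ℂ
      rw [hE₀apply, hE₀apply, sum_inner, inner_sum]
      refine Finset.sum_congr rfl fun i _ => ?_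
      rw [inner_smul_left, inner_smul_right, inner_conj_symm]
      ring
    have hidem : E₀ ∘L E₀ = E₀ := by
      ext x
      rw [ContinuousLinearMap.comp_apply, hE₀apply (E₀ x)]
      conv_rhs => rw [hE₀apply x]
      refine Finset.sum_congr rfl fun i hi => ?_
      congr 1
      rw [hE₀apply x, inner_sum]
      rw [Finset.sum_eq_single i]
      · rw [inner_smul_right, hψψ i i (hIne i hi) (hIne i hi), if_pos rfl, mul_one]
      · intro j hj hji
        rw [inner_smul_right, hψψ i j (hIne i hi) (hIne j hj), if_neg (Ne.symm hji), mul_zero]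
      · intro hnot
        exact absurd hi hnot
    refine ⟨E₀, hsa, hidem, ?_⟩
    rw [htrR E₀ hsa]
    refine Finset.sum_congr rfl fun i _ => ?_
    by_cases hi : μ i = 0
    · simp [hi]
    · have hEψ : E₀ (ψ i) = if 0 < μ i then ψ i else 0 := by
        rw [hE₀apply]
        by_cases hpos : 0 < μ i
        · rw [if_pos hpos]
          rw [Finset.sum_eq_single i]
          · rw [hψψ i i hi hi, if_pos rfl, one_smul]
          · intro j hj hji
            rw [hψψ j i (hIne j hj) hi, if_neg hji, zero_smul]
          · intro hnot
            exact absurd (Finset.mem_filter.mpr ⟨Finset.mem_univ i, hpos⟩) hnot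
        · rw [if_neg hpos]
          refine Finset.sum_eq_zero fun j hj => ?_
          have hji : j ≠ i := fun h => hpos (h ▸ (Finset.mem_filter.mp hj).2)
          rw [hψψ j i (hIne j hj) hi, if_neg hji, zero_smul]
      rcases lt_trichotomy (μ i) 0 with h | h | h
      · rw [hEψ, if_neg (not_lt.mpr h.le)]
        simp [max_eq_right h.le]
      · exact absurd h hi
      · rw [hEψ, if_pos h, hψψ i i hi hi, if_pos rfl]
        simp [max_eq_left h.le]
  exact IsGreatest.csSup_eq ⟨hmem, fun t ht => hub t ht⟩
end

section
/- Let μ be a finite positive measure (pricing model E) and a a nonnegative measurable function (asset) with E[a] = f > 0, and let ν = (E[a] − E[√a]²)/E[a]. Then for every strike k > 0, E[(a − k)⁺] ≤ ½(f − k) + ½√((f − k)² + 4 f k ν), where (x)⁺ = max(x, 0). -/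
open MeasureTheory

/-- Upper bound for the vanilla option price: if `E[a] = f > 0` and
`ν = (E[a] − E[√a]²)/E[a]`, then for every strike `k > 0`,
`E[(a − k)⁺] ≤ ½(f − k) + ½√((f − k)² + 4 f k ν)`. -/
theorem vanilla_option_price_bound
    {Ω : Type*} [MeasurableSpace Ω] (μ : Measure Ω) [IsProbabilityMeasure μ]
    (a : Ω → ℝ) (ha : ∀ ω, 0 ≤ a ω) (hmeas : Measurable a)
    (hint : Integrable a μ)
    (f ν : ℝ) (hf : f = ∫ ω, a ω ∂μ) (hfpos : 0 < f)
    (hν : ν = (f - (∫ ω, Real.sqrt (a ω) ∂μ) ^ 2) / f)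
    (k : ℝ) (hk : 0 < k) :
    ∫ ω, max (a ω - k) 0 ∂μ ≤
      (f - k) / 2 + Real.sqrt ((f - k) ^ 2 + 4 * f * k * ν) / 2 := by
  set g : Ω → ℝ := fun ω => Real.sqrt (a ω) with hg
  have hgmeas : Measurable g := hmeas.sqrt
  have hgnn : ∀ ω, 0 ≤ g ω := fun ω => Real.sqrt_nonneg _
  have hsq : ∀ ω, g ω ^ 2 = a ω := fun ω => Real.sq_sqrt (ha ω)
  have hgint : Integrable g μ := by
    refine (integrable_const 1 |>.add hint).mono' hgmeas.aestronglyMeasurable ?_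
    filter_upwards with ω
    simp only [Pi.add_apply]
    rw [Real.norm_of_nonneg (hgnn ω)]
    nlinarith [hsq ω, hgnn ω, sq_nonneg (g ω - 1)]
  set s : ℝ := ∫ ω, g ω ∂μ with hs
  set A : ℝ := f - 2 * Real.sqrt k * s + k with hA
  set B : ℝ := f + 2 * Real.sqrt k * s + k with hB
  have hksq : Real.sqrt k ^ 2 = k := Real.sq_sqrt hk.le
  have i1 : Integrable (fun ω => a ω - 2 * Real.sqrt k * g ω) μ :=
    hint.sub (hgint.const_mul _)
  have i1' : Integrable (fun ω => a ω + 2 * Real.sqrt k * g ω) μ :=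
    hint.add (hgint.const_mul _)
  have hsubint : Integrable (fun ω => (g ω - Real.sqrt k) ^ 2) μ := by
    have h : (fun ω => (g ω - Real.sqrt k) ^ 2) =
        fun ω => (a ω - 2 * Real.sqrt k * g ω) + k := by
      funext ω; rw [sub_sq, hsq ω, hksq]; ring
    rw [h]
    exact i1.add (integrable_const k)
  have haddint : Integrable (fun ω => (g ω + Real.sqrt k) ^ 2) μ := by
    have h : (fun ω => (g ω + Real.sqrt k) ^ 2) =
        fun ω => (a ω + 2 * Real.sqrt k * g ω) + k := by
      funext ω; rw [add_sq, hsq ω, hksq]; ring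
    rw [h]
    exact i1'.add (integrable_const k)
  have hintA : ∫ ω, (g ω - Real.sqrt k) ^ 2 ∂μ = A := by
    have h : (fun ω => (g ω - Real.sqrt k) ^ 2) =
        fun ω => (a ω - 2 * Real.sqrt k * g ω) + k := by
      funext ω; rw [sub_sq, hsq ω, hksq]; ring
    rw [h, integral_add i1 (integrable_const k),
      integral_sub hint (hgint.const_mul _), integral_const_mul, integral_const]
    simp [hA, hf, hs]
  have hintB : ∫ ω, (g ω + Real.sqrt k) ^ 2 ∂μ = B := by
    have h : (fun ω => (g ω + Real.sqrt k) ^ 2) =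
        fun ω => (a ω + 2 * Real.sqrt k * g ω) + k := by
      funext ω; rw [add_sq, hsq ω, hksq]; ring
    rw [h, integral_add i1' (integrable_const k),
      integral_add hint (hgint.const_mul _), integral_const_mul, integral_const]
    simp [hB, hf, hs]
  have hAnn : 0 ≤ A := by
    rw [← hintA]; exact integral_nonneg fun ω => sq_nonneg _
  have hBnn : 0 ≤ B := by
    rw [← hintB]; exact integral_nonneg fun ω => sq_nonneg _
  -- Cauchy-Schwarz
  have habs_int : Integrable (fun ω => |a ω - k|) μ := (hint.sub (integrable_const k)).abs
  have key : ∫ ω, |a ω - k| ∂μ ≤ Real.sqrt A * Real.sqrt B := by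
    have hmem1 : MemLp (fun ω => |g ω - Real.sqrt k|) (ENNReal.ofReal 2) μ := by
      rw [show ENNReal.ofReal 2 = 2 by norm_num]
      rw [memLp_two_iff_integrable_sq (f := fun ω => |g ω - Real.sqrt k|) ((hgmeas.sub measurable_const).abs).aestronglyMeasurable]
      simpa [sq_abs] using hsubint
    have hmem2 : MemLp (fun ω => g ω + Real.sqrt k) (ENNReal.ofReal 2) μ := by
      rw [show ENNReal.ofReal 2 = 2 by norm_num]
      rw [memLp_two_iff_integrable_sq (f := fun ω => g ω + Real.sqrt k) (hgmeas.add measurable_const).aestronglyMeasurable]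
      exact haddint
    have hconj : (2 : ℝ).HolderConjugate 2 := Real.holderConjugate_iff.mpr ⟨by norm_num, by norm_num⟩
    have hcs := integral_mul_le_Lp_mul_Lq_of_nonneg hconj
      (f := fun ω => |g ω - Real.sqrt k|) (g := fun ω => g ω + Real.sqrt k)
      (Filter.Eventually.of_forall fun ω => abs_nonneg _)
      (Filter.Eventually.of_forall fun ω => add_nonneg (hgnn ω) (Real.sqrt_nonneg k))
      hmem1 hmem2
    have heq : ∫ ω, |a ω - k| ∂μ = ∫ ω, |g ω - Real.sqrt k| * (g ω + Real.sqrt k) ∂μ := by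
      refine integral_congr_ae (Filter.Eventually.of_forall fun ω => ?_)
      show |a ω - k| = |g ω - Real.sqrt k| * (g ω + Real.sqrt k)
      rw [← abs_of_nonneg (add_nonneg (hgnn ω) (Real.sqrt_nonneg k)), ← abs_mul]
      congr 1
      linear_combination hksq - hsq ω
    have h1 : ∫ ω, |g ω - Real.sqrt k| ^ (2 : ℝ) ∂μ = A := by
      rw [← hintA]
      refine integral_congr_ae (Filter.Eventually.of_forall fun ω => ?_)
      show |g ω - Real.sqrt k| ^ (2 : ℝ) = (g ω - Real.sqrt k) ^ 2
      rw [show (2 : ℝ) = ((2 : ℕ) : ℝ) by norm_num, Real.rpow_natCast, sq_abs]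
    have h2 : ∫ ω, (g ω + Real.sqrt k) ^ (2 : ℝ) ∂μ = B := by
      rw [← hintB]
      refine integral_congr_ae (Filter.Eventually.of_forall fun ω => ?_)
      show (g ω + Real.sqrt k) ^ (2 : ℝ) = (g ω + Real.sqrt k) ^ 2
      rw [show (2 : ℝ) = ((2 : ℕ) : ℝ) by norm_num, Real.rpow_natCast]
    rw [heq]
    refine hcs.trans_eq ?_
    rw [h1, h2, Real.sqrt_eq_rpow, Real.sqrt_eq_rpow]
  -- identify the discriminant
  have hdisc : (f - k) ^ 2 + 4 * f * k * ν = A * B := by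
    have h : 4 * f * k * ν = 4 * k * (f - s ^ 2) := by
      rw [hν]; field_simp
    rw [h, hA, hB]; nlinarith [hksq]
  have hABsqrt : Real.sqrt A * Real.sqrt B =
      Real.sqrt ((f - k) ^ 2 + 4 * f * k * ν) := by
    rw [hdisc, Real.sqrt_mul hAnn]
  -- put it together
  have hmax : ∀ ω, max (a ω - k) 0 = ((a ω - k) + |a ω - k|) / 2 := fun ω => by
    rcases le_or_gt (a ω - k) 0 with h | h
    · rw [max_eq_right h, abs_of_nonpos h]; ring
    · rw [max_eq_left h.le, abs_of_pos h]; ring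
  have i2 : Integrable (fun ω => a ω - k) μ := hint.sub (integrable_const k)
  have hfinal : ∫ ω, max (a ω - k) 0 ∂μ = ((f - k) + ∫ ω, |a ω - k| ∂μ) / 2 := by
    rw [show (fun ω => max (a ω - k) 0) = fun ω => ((a ω - k) + |a ω - k|) / 2 from
      funext hmax]
    rw [integral_div, integral_add i2 habs_int,
      integral_sub hint (integrable_const k), integral_const]
    simp [hf]
  rw [hfinal, ← hABsqrt]
  linarith [key]
end

section
/- Let x₁, x₂ be positive random variables under a probability measure Ē with Ē[x₂] > 0, and define the measure E by E[a] = Ē[a x₂]/Ē[x₂]. Set x = x₁/x₂, ν = (E[x] − E[√x]²)/E[x], νᵢ = (Ē[xᵢ] − Ē[√xᵢ]²)/Ē[xᵢ] for i = 1,2, and ρ = (Ē[√(x₁x₂)] − Ē[√x₁]Ē[√x₂])/√((Ē[x₁] − Ē[√x₁]²)(Ē[x₂] − Ē[√x₂]²)). Then ν = 1 − (√((1−ν₁)(1−ν₂)) + ρ√(ν₁ν₂))². -/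
open MeasureTheory

/-- Cross FX rate root-variance: with `E[a] = Ē[a x₂]/Ē[x₂]` the measure associated to the
numéraire `x₂` and `x = x₁/x₂` the cross rate, the root-variance `ν` of `x` under `E`
satisfies `ν = 1 − (√((1−ν₁)(1−ν₂)) + ρ√(ν₁ν₂))²` in terms of the root-variances `ν₁, ν₂`
and correlation `ρ` of `√x₁, √x₂` under `Ē`. -/
theorem cross_rate_root_variance
    {Ω : Type*} [MeasurableSpace Ω] (μ : Measure Ω) [IsProbabilityMeasure μ]
    (x₁ x₂ : Ω → ℝ)
    (h₁pos : ∀ᵐ ω ∂μ, 0 < x₁ ω) (h₂pos : ∀ᵐ ω ∂μ, 0 < x₂ ω)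
    (h₁meas : Measurable x₁) (h₂meas : Measurable x₂)
    (h₁int : Integrable x₁ μ) (h₂int : Integrable x₂ μ)
    (h₁rint : Integrable (fun ω => Real.sqrt (x₁ ω)) μ)
    (h₂rint : Integrable (fun ω => Real.sqrt (x₂ ω)) μ)
    (hcint : Integrable (fun ω => Real.sqrt (x₁ ω * x₂ ω)) μ)
    (hx₂ : 0 < ∫ ω, x₂ ω ∂μ)
    (hvar₁ : 0 < (∫ ω, x₁ ω ∂μ) - (∫ ω, Real.sqrt (x₁ ω) ∂μ) ^ 2)
    (hvar₂ : 0 < (∫ ω, x₂ ω ∂μ) - (∫ ω, Real.sqrt (x₂ ω) ∂μ) ^ 2)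
    (ν₁ ν₂ ρ ν : ℝ)
    (hν₁ : ν₁ = ((∫ ω, x₁ ω ∂μ) - (∫ ω, Real.sqrt (x₁ ω) ∂μ) ^ 2) / ∫ ω, x₁ ω ∂μ)
    (hν₂ : ν₂ = ((∫ ω, x₂ ω ∂μ) - (∫ ω, Real.sqrt (x₂ ω) ∂μ) ^ 2) / ∫ ω, x₂ ω ∂μ)
    (hρ : ρ = ((∫ ω, Real.sqrt (x₁ ω * x₂ ω) ∂μ)
          - (∫ ω, Real.sqrt (x₁ ω) ∂μ) * ∫ ω, Real.sqrt (x₂ ω) ∂μ)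
        / Real.sqrt (((∫ ω, x₁ ω ∂μ) - (∫ ω, Real.sqrt (x₁ ω) ∂μ) ^ 2)
          * ((∫ ω, x₂ ω ∂μ) - (∫ ω, Real.sqrt (x₂ ω) ∂μ) ^ 2)))
    (hν : ν = (((∫ ω, (x₁ ω / x₂ ω) * x₂ ω ∂μ) / ∫ ω, x₂ ω ∂μ)
          - ((∫ ω, Real.sqrt (x₁ ω / x₂ ω) * x₂ ω ∂μ) / ∫ ω, x₂ ω ∂μ) ^ 2)
        / ((∫ ω, (x₁ ω / x₂ ω) * x₂ ω ∂μ) / ∫ ω, x₂ ω ∂μ)) :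
    ν = 1 - (Real.sqrt ((1 - ν₁) * (1 - ν₂)) + ρ * Real.sqrt (ν₁ * ν₂)) ^ 2 := by

  have hInt1 : ∫ ω, (x₁ ω / x₂ ω) * x₂ ω ∂μ = ∫ ω, x₁ ω ∂μ := by
    refine integral_congr_ae ?_
    filter_upwards [h₂pos] with ω h2
    field_simp
  have hInt2 : ∫ ω, Real.sqrt (x₁ ω / x₂ ω) * x₂ ω ∂μ
      = ∫ ω, Real.sqrt (x₁ ω * x₂ ω) ∂μ := by
    refine integral_congr_ae ?_
    filter_upwards [h₁pos, h₂pos] with ω h1 h2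
    rw [Real.sqrt_mul h1.le, Real.sqrt_div h1.le, div_mul_eq_mul_div, mul_div_assoc,
      Real.div_sqrt]
  set I1 := ∫ ω, x₁ ω ∂μ with hI1
  set I2 := ∫ ω, x₂ ω ∂μ with hI2
  set s1 := ∫ ω, Real.sqrt (x₁ ω) ∂μ with hs1
  set s2 := ∫ ω, Real.sqrt (x₂ ω) ∂μ with hs2
  set C := ∫ ω, Real.sqrt (x₁ ω * x₂ ω) ∂μ with hC
  have s1nn : 0 ≤ s1 := integral_nonneg fun ω => Real.sqrt_nonneg _
  have s2nn : 0 ≤ s2 := integral_nonneg fun ω => Real.sqrt_nonneg _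
  have hI1pos : 0 < I1 := lt_of_le_of_lt (by positivity) (by linarith [hvar₁] : s1 ^ 2 < I1)
  have hI12pos : 0 < I1 * I2 := mul_pos hI1pos hx₂
  have hsqI12 : 0 < Real.sqrt (I1 * I2) := Real.sqrt_pos.mpr hI12pos
  have hsqvv : 0 < Real.sqrt ((I1 - s1 ^ 2) * (I2 - s2 ^ 2)) :=
    Real.sqrt_pos.mpr (mul_pos hvar₁ hvar₂)
  have hA : Real.sqrt ((1 - ν₁) * (1 - ν₂)) = s1 * s2 / Real.sqrt (I1 * I2) := by
    have h : (1 - ν₁) * (1 - ν₂) = (s1 * s2 / Real.sqrt (I1 * I2)) ^ 2 := by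
      rw [hν₁, hν₂, div_pow, Real.sq_sqrt hI12pos.le]
      field_simp
      ring
    rw [h, Real.sqrt_sq (by positivity)]
  have hB : ρ * Real.sqrt (ν₁ * ν₂) = (C - s1 * s2) / Real.sqrt (I1 * I2) := by
    have h : ν₁ * ν₂ = ((I1 - s1 ^ 2) * (I2 - s2 ^ 2)) / (I1 * I2) := by
      rw [hν₁, hν₂]; field_simp
    rw [h, hρ, Real.sqrt_div (by positivity)]
    field_simp
  rw [hA, hB, ← add_div, add_sub_cancel, div_pow, Real.sq_sqrt hI12pos.le,
    hν, hInt1, hInt2]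
  field_simp
end
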